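/- In the Artin group A[Ã_n] of affine type Ã_n with standard generators t_0, t_1, ..., t_n, let ρ = t_1 t_2 ⋯ t_n. Then ρ t_i ρ^{-1} = t_{i+1} for all 1 ≤ i ≤ n−1, and ρ² t_n ρ^{-2} = t_1. -/

import Mathlib

open FreeGroup in
/-- Defining relations of the Artin group of affine type `Ã n` (`n ≥ 2`):
generators `t i` indexed by `ZMod (n+1)`, braid relations between cyclically
adjacent generators and commuting relations otherwise. -/
def ArtinAffineARels (n : ℕ) : Set (FreeGroup (ZMod (n + 1))) :=
  {w | ∃ i j : ZMod (n + 1),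
    (j = i + 1 ∧ w = of i * of j * of i * (of j * of i * of j)⁻¹) ∨
    (i ≠ j ∧ j ≠ i + 1 ∧ i ≠ j + 1 ∧ w = of i * of j * (of j * of i)⁻¹)}

/-- The Artin group of affine type `Ã n`. -/
def ArtinAffineA (n : ℕ) : Type := PresentedGroup (ArtinAffineARels n)

instance (n : ℕ) : Group (ArtinAffineA n) :=
  inferInstanceAs (Group (PresentedGroup (ArtinAffineARels n)))

/-- The standard generator `t i` of `A[Ã n]`. -/
def tA (n : ℕ) (i : ZMod (n + 1)) : ArtinAffineA n := PresentedGroup.of i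

/-- `ρ = t₁ t₂ ⋯ tₙ` in `A[Ã n]`. -/
def rhoA (n : ℕ) : ArtinAffineA n :=
  ((List.range n).map (fun k => tA n ((k + 1 : ℕ) : ZMod (n + 1)))).prod

namespace ArtinAffineAux

variable {n : ℕ}

lemma rel_one {r : FreeGroup (ZMod (n+1))} (hr : r ∈ ArtinAffineARels n) :
    (PresentedGroup.mk (ArtinAffineARels n) r : ArtinAffineA n) = 1 :=
  (QuotientGroup.eq_one_iff r).mpr (Subgroup.subset_normalClosure hr)

lemma braid (i : ZMod (n+1)) :
    tA n i * tA n (i+1) * tA n i = tA n (i+1) * tA n i * tA n (i+1) := by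
  have h := rel_one (n := n) ⟨i, i+1, Or.inl ⟨rfl, rfl⟩⟩
  simp only [map_mul, map_inv, mul_inv_eq_one] at h
  exact h

lemma commZ (i j : ZMod (n+1)) (h1 : i ≠ j) (h2 : j ≠ i+1) (h3 : i ≠ j+1) :
    Commute (tA n i) (tA n j) := by
  have h := rel_one (n := n) ⟨i, j, Or.inr ⟨h1, h2, h3, rfl⟩⟩
  simp only [map_mul, map_inv, mul_inv_eq_one] at h
  exact h

/-- generator indexed by a natural number -/
def TN (n k : ℕ) : ArtinAffineA n := tA n (k : ZMod (n+1))

lemma braidN (i : ℕ) :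
    TN n i * TN n (i+1) * TN n i = TN n (i+1) * TN n i * TN n (i+1) := by
  have h : ((i+1:ℕ) : ZMod (n+1)) = (i : ZMod (n+1)) + 1 := by push_cast; ring
  unfold TN; rw [h]; exact braid _

lemma commN (a b : ℕ) (h1 : a % (n+1) ≠ b % (n+1))
    (h2 : b % (n+1) ≠ (a+1) % (n+1)) (h3 : a % (n+1) ≠ (b+1) % (n+1)) :
    Commute (TN n a) (TN n b) := by
  apply commZ
  · rw [Ne, ZMod.natCast_eq_natCast_iff']; exact h1
  · rw [Ne, show ((a : ZMod (n+1)) + 1) = ((a+1 : ℕ) : ZMod (n+1)) by push_cast; ring,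
      ZMod.natCast_eq_natCast_iff']; exact h2
  · rw [Ne, show ((b : ZMod (n+1)) + 1) = ((b+1 : ℕ) : ZMod (n+1)) by push_cast; ring,
      ZMod.natCast_eq_natCast_iff']; exact h3

/-- product t_a t_{a+1} ... t_{a+b-1} -/
def LP (n a b : ℕ) : ArtinAffineA n := ((List.range' a b).map fun k => TN n k).prod

lemma LP_zero (a : ℕ) : LP n a 0 = 1 := rfl

lemma LP_one (a : ℕ) : LP n a 1 = TN n a := by simp [LP]

lemma LP_succ_left (a b : ℕ) : LP n a (b+1) = TN n a * LP n (a+1) b := by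
  rw [LP, List.range'_succ]; simp [LP]

lemma LP_append (a b c : ℕ) : LP n a b * LP n (a+b) c = LP n a (c+b) := by
  rw [LP, LP, LP, ← List.prod_append, ← List.map_append, List.range'_append_1, Nat.add_comm]

lemma commute_LP (x : ArtinAffineA n) (a b : ℕ)
    (h : ∀ k, a ≤ k → k < a + b → Commute x (TN n k)) : Commute x (LP n a b) := by
  apply Commute.list_prod_right
  intro y hy
  simp only [List.mem_map] at hy
  obtain ⟨k, hk, rfl⟩ := hy
  rw [List.mem_range'_1] at hk
  exact h k hk.1 hk.2

lemma rho_eq : rhoA n = LP n 1 n := by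
  rw [rhoA, LP, List.range'_eq_map_range, List.map_map]
  congr 1
  exact List.map_congr_left fun k _ => by simp [TN, Nat.add_comm]

lemma rho_conj (i : ℕ) (h1 : 1 ≤ i) (h2 : i ≤ n - 1) (hn : 2 ≤ n) :
    rhoA n * TN n i = TN n (i+1) * rhoA n := by
  set L1 := LP n 1 (i-1) with hL1
  set L2 := LP n (i+2) (n-i-1) with hL2
  have c1 : Commute (TN n i) L2 := by
    apply commute_LP
    intro k hk1 hk2
    apply commN
    · rw [Nat.mod_eq_of_lt (by omega), Nat.mod_eq_of_lt (by omega)]; omega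
    · rw [Nat.mod_eq_of_lt (by omega), Nat.mod_eq_of_lt (by omega)]; omega
    · rcases eq_or_lt_of_le (show k + 1 ≤ n + 1 by omega) with he | hl
      · rw [Nat.mod_eq_of_lt (by omega), he, Nat.mod_self]; omega
      · rw [Nat.mod_eq_of_lt (by omega), Nat.mod_eq_of_lt hl]; omega
  have c2 : Commute (TN n (i+1)) L1 := by
    apply commute_LP
    intro k hk1 hk2
    apply commN
    · rw [Nat.mod_eq_of_lt (by omega), Nat.mod_eq_of_lt (by omega)]; omega
    · rcases eq_or_lt_of_le (show i + 2 ≤ n + 1 by omega) with he | hl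
      · rw [Nat.mod_eq_of_lt (by omega), he, Nat.mod_self]; omega
      · rw [Nat.mod_eq_of_lt (by omega), Nat.mod_eq_of_lt hl]; omega
    · rw [Nat.mod_eq_of_lt (by omega), Nat.mod_eq_of_lt (by omega)]; omega
  have e2 : LP n i (n + 1 - i) = TN n i * (TN n (i+1) * L2) := by
    rw [show n + 1 - i = (n - i - 1) + 1 + 1 from by omega, LP_succ_left, LP_succ_left, hL2,
      show i + 1 + 1 = i + 2 from rfl]
  have e1 : L1 * LP n i (n + 1 - i) = LP n 1 n := by
    have h := LP_append (n := n) 1 (i-1) (n+1-i)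
    rw [show 1 + (i-1) = i from by omega, show (n+1-i) + (i-1) = n from by omega] at h
    exact h
  have hsplit : rhoA n = L1 * (TN n i * (TN n (i+1) * L2)) := by
    rw [rho_eq, ← e1, e2]
  have b1 : ∀ x : ArtinAffineA n,
      TN n i * (TN n (i+1) * (TN n i * x)) = TN n (i+1) * (TN n i * (TN n (i+1) * x)) := by
    intro x
    calc TN n i * (TN n (i+1) * (TN n i * x)) = (TN n i * TN n (i+1) * TN n i) * x := by
          simp only [mul_assoc]
      _ = (TN n (i+1) * TN n i * TN n (i+1)) * x := by rw [braidN]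
      _ = TN n (i+1) * (TN n i * (TN n (i+1) * x)) := by simp only [mul_assoc]
  calc rhoA n * TN n i
      = L1 * (TN n i * (TN n (i+1) * (L2 * TN n i))) := by rw [hsplit]; simp only [mul_assoc]
    _ = L1 * (TN n i * (TN n (i+1) * (TN n i * L2))) := by rw [← c1.eq]
    _ = L1 * (TN n (i+1) * (TN n i * (TN n (i+1) * L2))) := by rw [b1]
    _ = TN n (i+1) * (L1 * (TN n i * (TN n (i+1) * L2))) := by
          rw [← mul_assoc, ← c2.eq, mul_assoc]
    _ = TN n (i+1) * rhoA n := by rw [← hsplit]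

lemma rho_push (hn : 2 ≤ n) :
    ∀ b a : ℕ, 1 ≤ a → a + b ≤ n → rhoA n * LP n a b = LP n (a+1) b * rhoA n := by
  intro b
  induction b with
  | zero => intro a _ _; simp [LP_zero]
  | succ b ih =>
    intro a ha hab
    rw [LP_succ_left, LP_succ_left]
    calc rhoA n * (TN n a * LP n (a+1) b) = (rhoA n * TN n a) * LP n (a+1) b :=
          (mul_assoc _ _ _).symm
      _ = (TN n (a+1) * rhoA n) * LP n (a+1) b := by rw [rho_conj a ha (by omega) hn]
      _ = TN n (a+1) * (rhoA n * LP n (a+1) b) := mul_assoc _ _ _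
      _ = TN n (a+1) * (LP n (a+1+1) b * rhoA n) := by rw [ih (a+1) (by omega) (by omega)]
      _ = TN n (a+1) * LP n (a+1+1) b * rhoA n := (mul_assoc _ _ _).symm

lemma claim2 (hn : 2 ≤ n) :
    TN n 1 * (rhoA n * rhoA n) = (rhoA n * rhoA n) * TN n n := by
  have hpush : rhoA n * LP n 1 (n-1) = LP n 2 (n-1) * rhoA n :=
    rho_push hn (n-1) 1 le_rfl (by omega)
  have hsplit : rhoA n = LP n 1 (n-1) * TN n n := by
    have h := LP_append (n := n) 1 (n-1) 1
    rw [show 1 + (n-1) = n from by omega, LP_one] at h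
    rw [rho_eq, ← h]
  have hfront : TN n 1 * LP n 2 (n-1) = rhoA n := by
    have h := LP_succ_left (n := n) 1 (n-1)
    rw [show n - 1 + 1 = n from by omega, show (1:ℕ) + 1 = 2 from rfl] at h
    rw [rho_eq, h]
  calc TN n 1 * (rhoA n * rhoA n)
      = TN n 1 * (rhoA n * (LP n 1 (n-1) * TN n n)) := by rw [← hsplit]
    _ = TN n 1 * ((rhoA n * LP n 1 (n-1)) * TN n n) := by rw [mul_assoc]
    _ = TN n 1 * ((LP n 2 (n-1) * rhoA n) * TN n n) := by rw [hpush]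
    _ = (TN n 1 * LP n 2 (n-1)) * (rhoA n * TN n n) := by simp only [mul_assoc]
    _ = rhoA n * (rhoA n * TN n n) := by rw [hfront]
    _ = (rhoA n * rhoA n) * TN n n := (mul_assoc _ _ _).symm

end ArtinAffineAux

/-- `ρ t_i ρ⁻¹ = t_{i+1}` for `1 ≤ i ≤ n-1`, and `ρ² tₙ ρ⁻² = t₁`. -/
theorem stmt0 (n : ℕ) (hn : 2 ≤ n) :
    (∀ i : ℕ, 1 ≤ i → i ≤ n - 1 →
      rhoA n * tA n (i : ZMod (n + 1)) * (rhoA n)⁻¹ = tA n ((i + 1 : ℕ) : ZMod (n + 1))) ∧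
    rhoA n ^ 2 * tA n ((n : ℕ) : ZMod (n + 1)) * (rhoA n ^ 2)⁻¹ =
      tA n ((1 : ℕ) : ZMod (n + 1)) := by
  constructor
  · intro i h1 h2
    rw [mul_inv_eq_iff_eq_mul]
    exact ArtinAffineAux.rho_conj i h1 h2 hn
  · rw [mul_inv_eq_iff_eq_mul, pow_two]
    exact (ArtinAffineAux.claim2 hn).symm
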